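/- arXiv:2308.12183 — 2 statements merged into one kernel-verified Lean document; each statement's English description precedes it below -/
import Mathlib

section
/- For any point x in the Sierpiński gasket SG and any n ∈ ℕ, the ball B(x, 2^{-(n+1)}) in Euclidean distance intersects the vertex set of SG_n in at least one and at most two points. -/
open Filter MeasureTheory Metric Set

noncomputable section

/-- The plane with the Euclidean metric. -/
abbrev E2 : Type := EuclideanSpace ℝ (Fin 2)

/-- The corners of the unit equilateral triangle. -/
def gasketVertex : Fin 3 → E2
  | 0 => !₂[0, 0]
  | 1 => !₂[1, 0]
  | 2 => !₂[1 / 2, Real.sqrt 3 / 2]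

/-- The contraction `ψ_i(x) = (x - u_i)/2 + u_i`. -/
def gasketMap (i : Fin 3) (x : E2) : E2 :=
  (1 / 2 : ℝ) • (x - gasketVertex i) + gasketVertex i

/-- For a word `w = [w₁, ..., wₘ]`, the composition `ψ_w = ψ_{wₘ} ∘ ... ∘ ψ_{w₁}`. -/
def gasketWordMap (w : List (Fin 3)) (x : E2) : E2 :=
  w.foldl (fun p i => gasketMap i p) x

/-- The vertex set of the level-`n` approximation graph `SG_n`. -/
def gasketVertices (n : ℕ) : Set E2 :=
  ⋃ w ∈ {w : List (Fin 3) | w.length = n},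
    gasketWordMap w '' {gasketVertex 0, gasketVertex 1, gasketVertex 2}

lemma gasketMap_apply (i : Fin 3) (p : E2) (j : Fin 2) :
    gasketMap i p j = (p j + gasketVertex i j) / 2 := by
  simp [gasketMap]
  ring

lemma vertex_coord (i : Fin 3) :
    ∃ a b : ℤ, gasketVertex i 0 = a + b / 2 ∧ gasketVertex i 1 = b * (Real.sqrt 3 / 2) := by
  fin_cases i
  · exact ⟨0, 0, by norm_num [gasketVertex], by norm_num [gasketVertex]⟩
  · exact ⟨1, 0, by norm_num [gasketVertex], by norm_num [gasketVertex]⟩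
  · exact ⟨0, 1, by norm_num [gasketVertex], by norm_num [gasketVertex]⟩

def latt (n : ℕ) : Set E2 :=
  {p | ∃ a b : ℤ, p 0 = (a + b / 2) / 2 ^ n ∧ p 1 = b * (Real.sqrt 3 / 2) / 2 ^ n}

lemma gasketMap_latt {p : E2} {k : ℕ} (i : Fin 3) (hp : p ∈ latt k) :
    gasketMap i p ∈ latt (k + 1) := by
  obtain ⟨a, b, h0, h1⟩ := hp
  obtain ⟨a', b', g0, g1⟩ := vertex_coord i
  refine ⟨a + a' * 2 ^ k, b + b' * 2 ^ k, ?_, ?_⟩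
  · rw [gasketMap_apply, h0, g0]; push_cast; field_simp; ring
  · rw [gasketMap_apply, h1, g1]; push_cast; field_simp; ring

lemma wordMap_latt (w : List (Fin 3)) : ∀ (k : ℕ) (p : E2), p ∈ latt k →
    gasketWordMap w p ∈ latt (k + w.length) := by
  induction w with
  | nil => intro k p hp; simpa [gasketWordMap] using hp
  | cons i w ih =>
    intro k p hp
    have : gasketWordMap (i :: w) p = gasketWordMap w (gasketMap i p) := by
      simp [gasketWordMap]
    rw [this]
    have := ih (k + 1) _ (gasketMap_latt i hp)
    simpa [Nat.add_assoc, Nat.add_comm 1 w.length] using this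

lemma vertices_latt {n : ℕ} {p : E2} (hp : p ∈ gasketVertices n) : p ∈ latt n := by
  simp only [gasketVertices, mem_iUnion, Set.mem_setOf_eq] at hp
  obtain ⟨w, hw, v, hv, rfl⟩ := hp
  have hv0 : v ∈ latt 0 := by
    rcases hv with rfl | rfl | rfl
    · obtain ⟨a,b,h⟩ := vertex_coord 0; exact ⟨a,b, by simpa using h⟩
    · obtain ⟨a,b,h⟩ := vertex_coord 1; exact ⟨a,b, by simpa using h⟩
    · obtain ⟨a,b,h⟩ := vertex_coord 2; exact ⟨a,b, by simpa using h⟩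
  have := wordMap_latt w 0 v hv0
  rwa [Nat.zero_add, hw] at this

lemma int_form {A B : ℤ} (h : ¬(A = 0 ∧ B = 0)) : 1 ≤ A ^ 2 + A * B + B ^ 2 := by
  rcases eq_or_ne B 0 with rfl | hB
  · simp only [and_true] at h
    have := Int.one_le_abs (by simpa using h)
    nlinarith [sq_abs A]
  · have h1 : 1 ≤ B ^ 2 := by
      have := Int.one_le_abs hB
      nlinarith [sq_abs B]
    have h4 : 3 ≤ 4 * (A ^ 2 + A * B + B ^ 2) := by nlinarith [sq_nonneg (2*A + B)]
    omega

lemma latt_sep {n : ℕ} {p q : E2} (hp : p ∈ latt n) (hq : q ∈ latt n) (hne : p ≠ q) :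
    1 / 2 ^ n ≤ dist p q := by
  obtain ⟨a, b, h0, h1⟩ := hp
  obtain ⟨c, d, g0, g1⟩ := hq
  have hsq : dist p q ^ 2 = (p 0 - q 0) ^ 2 + (p 1 - q 1) ^ 2 := by
    rw [EuclideanSpace.dist_eq, Fin.sum_univ_two, Real.dist_eq, Real.dist_eq,
      Real.sq_sqrt (by positivity)]
    rw [sq_abs, sq_abs]
  have hne2 : ¬(a - c = 0 ∧ b - d = 0) := by
    rintro ⟨hA, hB⟩
    apply hne
    have ha : a = c := by omega
    have hb : b = d := by omega
    subst ha hb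
    ext j
    fin_cases j
    · show p 0 = q 0; rw [h0, g0]
    · show p 1 = q 1; rw [h1, g1]
  have key : (1:ℝ) ≤ ((a-c:ℤ):ℝ) ^ 2 + ((a-c:ℤ):ℝ) * ((b-d:ℤ):ℝ) + ((b-d:ℤ):ℝ) ^ 2 := by
    exact_mod_cast int_form hne2
  have h3 : Real.sqrt 3 ^ 2 = 3 := Real.sq_sqrt (by norm_num)
  set A : ℝ := ((a-c:ℤ):ℝ) with hA
  set B : ℝ := ((b-d:ℤ):ℝ) with hB
  have e0 : p 0 - q 0 = (A + B / 2) / 2 ^ n := by rw [h0, g0, hA, hB]; push_cast; ring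
  have e1 : p 1 - q 1 = B * (Real.sqrt 3 / 2) / 2 ^ n := by
    rw [h1, g1, hB]; push_cast; ring
  have hnum : (A + B / 2) ^ 2 + (B * (Real.sqrt 3 / 2)) ^ 2 = A ^ 2 + A * B + B ^ 2 := by
    linear_combination (B ^ 2 / 4) * h3
  have hval : dist p q ^ 2 = (A ^ 2 + A * B + B ^ 2) / ((2:ℝ) ^ n) ^ 2 := by
    rw [hsq, e0, e1, div_pow, div_pow, ← add_div, hnum]
  have hge : (1 / 2 ^ n : ℝ) ^ 2 ≤ dist p q ^ 2 := by
    rw [hval, div_pow, one_pow]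
    gcongr
  exact (pow_le_pow_iff_left₀ (by positivity) dist_nonneg two_ne_zero).1 hge

lemma gasketMap_dist (i : Fin 3) (a b : E2) :
    dist (gasketMap i a) (gasketMap i b) = dist a b / 2 := by
  have : gasketMap i a - gasketMap i b = (1/2 : ℝ) • (a - b) := by
    simp only [gasketMap]; module
  rw [dist_eq_norm, this, norm_smul, dist_eq_norm]
  simp [Real.norm_eq_abs]
  ring

lemma gasketMap_comb (i : Fin 3) (y : E2) :
    gasketMap i y = (1/2 : ℝ) • y + (1/2 : ℝ) • gasketVertex i := by
  simp only [gasketMap]; module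

lemma vertex_dist_le (i j : Fin 3) : dist (gasketVertex i) (gasketVertex j) ≤ 1 := by
  have h3 : Real.sqrt 3 ^ 2 = 3 := Real.sq_sqrt (by norm_num)
  have h3n : 0 ≤ Real.sqrt 3 := Real.sqrt_nonneg 3
  have key : ∀ u v : E2, (u 0 - v 0) ^ 2 + (u 1 - v 1) ^ 2 ≤ 1 → dist u v ≤ 1 := by
    intro u v h
    rw [EuclideanSpace.dist_eq, Fin.sum_univ_two, Real.dist_eq, Real.dist_eq, sq_abs, sq_abs]
    calc Real.sqrt ((u 0 - v 0) ^ 2 + (u 1 - v 1) ^ 2) ≤ Real.sqrt 1 := Real.sqrt_le_sqrt h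
    _ = 1 := Real.sqrt_one
  fin_cases i <;> fin_cases j <;>
    apply key <;> simp [gasketVertex] <;> nlinarith [h3, h3n]

def Tset : Set E2 := convexHull ℝ {gasketVertex 0, gasketVertex 1, gasketVertex 2}

lemma Tset_dist (y : E2) (hy : y ∈ Tset) (i : Fin 3) : dist y (gasketVertex i) ≤ 1 := by
  have hsub : Tset ⊆ closedBall (gasketVertex i) 1 := by
    apply convexHull_min ?_ (convex_closedBall _ _)
    rintro v (rfl | rfl | rfl) <;> exact mem_closedBall.2 (vertex_dist_le _ i)
  exact mem_closedBall.1 (hsub hy)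

lemma Tset_map (i : Fin 3) (y : E2) (hy : y ∈ Tset) : gasketMap i y ∈ Tset := by
  rw [gasketMap_comb]
  have hconv : Convex ℝ Tset := convex_convexHull _ _
  have hvi : gasketVertex i ∈ Tset := by
    apply subset_convexHull
    fin_cases i <;> simp
  exact hconv hy hvi (by norm_num) (by norm_num) (by norm_num)

lemma Tset_nonempty : Tset.Nonempty :=
  ⟨gasketVertex 0, subset_convexHull _ _ (by simp)⟩

lemma Tset_closed : IsClosed Tset := by
  have : ({gasketVertex 0, gasketVertex 1, gasketVertex 2} : Set E2).Finite := by
    exact (Set.finite_singleton _).insert _ |>.insert _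
  exact (this.isCompact_convexHull ℝ).isClosed

lemma SG_subset_T (SG : Set E2) (hne : SG.Nonempty) (hcpt : IsCompact SG)
    (hattr : SG = ⋃ i : Fin 3, gasketMap i '' SG) : SG ⊆ Tset := by
  have hcont : Continuous fun x : E2 => infDist x Tset := continuous_infDist_pt _
  obtain ⟨x₀, hx₀, hmax'⟩ := hcpt.exists_isMaxOn hne hcont.continuousOn
  have hmax : ∀ y ∈ SG, infDist y Tset ≤ infDist x₀ Tset := fun y hy => hmax' hy
  have hhalf : ∀ (i : Fin 3) (y : E2), infDist (gasketMap i y) Tset ≤ infDist y Tset / 2 := by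
    intro i y
    apply le_of_forall_pos_le_add
    intro ε hε
    obtain ⟨t, ht, hdt⟩ : ∃ t ∈ Tset, dist y t < infDist y Tset + 2 * ε :=
      (infDist_lt_iff Tset_nonempty).1 (by linarith [infDist_nonneg (x := y) (s := Tset)])
    calc infDist (gasketMap i y) Tset ≤ dist (gasketMap i y) (gasketMap i t) :=
          infDist_le_dist_of_mem (Tset_map i t ht)
      _ = dist y t / 2 := gasketMap_dist i y t
      _ ≤ infDist y Tset / 2 + ε := by linarith
  have hM0 : infDist x₀ Tset ≤ 0 := by
    rw [hattr] at hx₀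
    obtain ⟨i, y, hy, rfl⟩ := by simpa using hx₀
    have h1 := hhalf i y
    have h2 := hmax y hy
    linarith
  intro x hx
  have h1 : infDist x Tset ≤ 0 := le_trans (hmax x hx) hM0
  have h2 : infDist x Tset = 0 := le_antisymm h1 infDist_nonneg
  exact (Tset_closed.mem_iff_infDist_zero Tset_nonempty).2 h2

lemma wordMap_cons (i : Fin 3) (w : List (Fin 3)) (x : E2) :
    gasketWordMap (i :: w) x = gasketWordMap w (gasketMap i x) := rfl

lemma wordMap_concat (i : Fin 3) (w : List (Fin 3)) (x : E2) :
    gasketWordMap (w ++ [i]) x = gasketMap i (gasketWordMap w x) := by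
  simp [gasketWordMap]

lemma wordMap_dist (w : List (Fin 3)) (a b : E2) :
    dist (gasketWordMap w a) (gasketWordMap w b) = dist a b / 2 ^ w.length := by
  induction w generalizing a b with
  | nil => simp [gasketWordMap]
  | cons i w ih =>
    rw [wordMap_cons, wordMap_cons, ih, gasketMap_dist]
    rw [List.length_cons, pow_succ]
    ring

lemma SG_decomp (SG : Set E2) (hattr : SG = ⋃ i : Fin 3, gasketMap i '' SG) :
    ∀ n : ℕ, ∀ x ∈ SG, ∃ (w : List (Fin 3)) (i : Fin 3) (y : E2),
      y ∈ SG ∧ w.length = n ∧ x = gasketWordMap w (gasketMap i y) := by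
  intro n
  induction n with
  | zero =>
    intro x hx
    rw [hattr] at hx
    obtain ⟨i, y, hy, rfl⟩ := by simpa using hx
    exact ⟨[], i, y, hy, rfl, rfl⟩
  | succ n ih =>
    intro x hx
    rw [hattr] at hx
    obtain ⟨i, z, hz, rfl⟩ := by simpa using hx
    obtain ⟨w, j, y, hy, hw, rfl⟩ := ih z hz
    exact ⟨w ++ [i], j, y, hy, by simp [hw], (wordMap_concat i w _).symm⟩

lemma gasketMap_fixed (i : Fin 3) : gasketMap i (gasketVertex i) = gasketVertex i := by
  simp [gasketMap]

lemma exists_near_vertex (SG : Set E2) (hne : SG.Nonempty) (hcpt : IsCompact SG)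
    (hattr : SG = ⋃ i : Fin 3, gasketMap i '' SG) (x : E2) (hx : x ∈ SG) (n : ℕ) :
    ∃ v ∈ gasketVertices n, dist x v ≤ 1 / 2 ^ (n + 1) := by
  obtain ⟨w, i, y, hy, hw, rfl⟩ := SG_decomp SG hattr n x hx
  refine ⟨gasketWordMap w (gasketVertex i), ?_, ?_⟩
  · simp only [gasketVertices, mem_iUnion, Set.mem_setOf_eq]
    refine ⟨w, hw, gasketVertex i, ?_, rfl⟩
    fin_cases i <;> simp
  · have h1 : dist (gasketMap i y) (gasketVertex i) ≤ 1 / 2 := by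
      calc dist (gasketMap i y) (gasketVertex i)
          = dist (gasketMap i y) (gasketMap i (gasketVertex i)) := by rw [gasketMap_fixed]
        _ = dist y (gasketVertex i) / 2 := gasketMap_dist _ _ _
        _ ≤ 1 / 2 := by
            have := Tset_dist y (SG_subset_T SG hne hcpt hattr hy) i
            linarith
    rw [wordMap_dist, hw, pow_succ]
    rw [div_le_div_iff₀ (by positivity) (by positivity)]
    nlinarith [pow_pos (by norm_num : (0:ℝ) < 2) n]

lemma antipodal {x a b : E2} {r : ℝ} (hr : 0 < r) (ha : dist a x ≤ r) (hb : dist b x ≤ r)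
    (hab : 2 * r ≤ dist a b) : b = x + (x - a) := by
  have htri : dist a b ≤ dist a x + dist b x := dist_triangle_right a b x
  have hax : dist a x = r := by linarith
  have hbx : dist b x = r := by linarith
  have habe : dist a b = 2 * r := by linarith
  set u : E2 := a - x with hu
  set v : E2 := x - b with hv
  have hnu : ‖u‖ = r := by rw [hu, ← dist_eq_norm, hax]
  have hnv : ‖v‖ = r := by rw [hv, ← dist_eq_norm, dist_comm]; exact hbx
  have hsum : ‖u + v‖ = 2 * r := by
    have : u + v = a - b := by rw [hu, hv]; abel
    rw [this, ← dist_eq_norm, habe]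
  have hinner : (inner ℝ u v : ℝ) = ‖u‖ * ‖v‖ := by
    have h := norm_add_sq_real u v
    rw [hsum, hnu, hnv] at h
    rw [hnu, hnv]
    nlinarith [h]
  have heq : ‖v‖ • u = ‖u‖ • v := inner_eq_norm_mul_iff_real.1 hinner
  rw [hnu, hnv] at heq
  have huv : u = v := smul_right_injective E2 (ne_of_gt hr) heq
  have : a - x = x - b := by rw [← hu, ← hv, huv]
  have hb2 : b = x - (a - x) := by
    rw [this]; abel
  rw [hb2]; abel


theorem stmt_10 (SG : Set E2) (hne : SG.Nonempty) (hcpt : IsCompact SG)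
    (hattr : SG = ⋃ i : Fin 3, gasketMap i '' SG) :
    ∀ x ∈ SG, ∀ n : ℕ,
      1 ≤ (gasketVertices n ∩ closedBall x ((2 : ℝ) ^ (-(n + 1) : ℤ))).encard ∧
      (gasketVertices n ∩ closedBall x ((2 : ℝ) ^ (-(n + 1) : ℤ))).encard ≤ 2 := by
  intro x hx n
  have hr : (2 : ℝ) ^ (-(n + 1) : ℤ) = 1 / 2 ^ (n + 1) := by
    rw [show (-(n + 1) : ℤ) = -((n + 1 : ℕ) : ℤ) by push_cast; ring, zpow_neg, zpow_natCast,
      one_div]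
  have hrpos : (0:ℝ) < 1 / 2 ^ (n + 1) := by positivity
  have h2r : 2 * (1 / 2 ^ (n + 1) : ℝ) = 1 / 2 ^ n := by
    rw [pow_succ]; field_simp
  obtain ⟨v, hv, hdv⟩ := exists_near_vertex SG hne hcpt hattr x hx n
  have hvball : v ∈ closedBall x ((2 : ℝ) ^ (-(n + 1) : ℤ)) := by
    rw [mem_closedBall, dist_comm, hr]; exact hdv
  constructor
  · rw [Set.one_le_encard_iff_nonempty]
    exact ⟨v, hv, hvball⟩
  · have hsub : gasketVertices n ∩ closedBall x ((2 : ℝ) ^ (-(n + 1) : ℤ)) ⊆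
        {v, x + (x - v)} := by
      rintro b ⟨hb1, hb2⟩
      rcases eq_or_ne b v with rfl | hbv
      · exact Or.inl rfl
      · right
        refine antipodal hrpos ?_ ?_ ?_
        · rw [← mem_closedBall, ← hr]; exact hvball
        · rw [← mem_closedBall, ← hr]; exact hb2
        · rw [h2r]
          exact latt_sep (vertices_latt hv) (vertices_latt hb1) (fun h => hbv h.symm)
    calc (gasketVertices n ∩ closedBall x ((2 : ℝ) ^ (-(n + 1) : ℤ))).encard
        ≤ ({v, x + (x - v)} : Set E2).encard := encard_le_encard hsub
      _ ≤ 2 := by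
          refine (Set.encard_insert_le _ _).trans ?_
          rw [Set.encard_singleton]
          rfl
end
end

section
/- Let G be a finite connected multigraph with sink s. The stabilization of any sandpile configuration is well-defined: any two maximal sequences of legal topplings starting from the same configuration η use each vertex the same number of times and produce the same stable configuration η°. -/
open Finset

variable {V : Type}

/-- Toppling the vertex `v`: it loses `deg v` chips and each neighbour `u`
gains `a u v` chips (one per connecting edge). The sink is `none : Option V`. -/
def topple (a : Option V → Option V → ℕ) (deg : Option V → ℕ)
    [DecidableEq V] (η : V → ℤ) (v : V) : V → ℤ :=
  fun u => η u - (if u = v then (deg (some v) : ℤ) else 0) + (a (some u) (some v) : ℤ)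

/-- Applying a sequence of topplings. -/
def toppleSeq (a : Option V → Option V → ℕ) (deg : Option V → ℕ)
    [DecidableEq V] (η : V → ℤ) (l : List V) : V → ℤ :=
  l.foldl (topple a deg) η

/-- A sequence of topplings is legal if each toppled vertex is unstable at the
moment it is toppled. -/
def LegalSeq (a : Option V → Option V → ℕ) (deg : Option V → ℕ)
    [DecidableEq V] : (V → ℤ) → List V → Prop
  | _, [] => True
  | η, v :: l => (deg (some v) : ℤ) ≤ η v ∧ LegalSeq a deg (topple a deg η v) l

/-- A configuration is stable if every non-sink vertex has fewer chips than
its degree. -/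
def StableConfig (deg : Option V → ℕ) (η : V → ℤ) : Prop :=
  ∀ v : V, η v < (deg (some v) : ℤ)

section Aux

variable (a : Option V → Option V → ℕ) (deg : Option V → ℕ) [DecidableEq V]

lemma topple_comm (η : V → ℤ) (v w : V) :
    topple a deg (topple a deg η v) w = topple a deg (topple a deg η w) v := by
  funext u; simp only [topple]; ring

lemma toppleSeq_cons (η : V → ℤ) (v : V) (l : List V) :
    toppleSeq a deg η (v :: l) = toppleSeq a deg (topple a deg η v) l := rfl

lemma le_topple_of_ne (η : V → ℤ) {u v : V} (h : u ≠ v) :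
    η u ≤ topple a deg η v u := by
  simp only [topple, if_neg h]
  have : (0 : ℤ) ≤ (a (some u) (some v) : ℤ) := Int.natCast_nonneg _
  omega

lemma le_toppleSeq_of_not_mem (η : V → ℤ) {u : V} :
    ∀ {l : List V}, u ∉ l → η u ≤ toppleSeq a deg η l u := by
  intro l
  induction l generalizing η with
  | nil => intro _; exact le_refl _
  | cons w l ih =>
    intro h
    rw [toppleSeq_cons]
    exact le_trans (le_topple_of_ne a deg η (fun e => h (e ▸ (List.mem_cons_self : w ∈ w :: l))))
      (ih _ (fun e => h (List.mem_cons_of_mem _ e)))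

variable [Fintype V]

lemma toppleSeq_formula (l : List V) (η : V → ℤ) (u : V) :
    toppleSeq a deg η l u = η u + ∑ v : V, (l.count v : ℤ) *
      ((a (some u) (some v) : ℤ) - if u = v then (deg (some v) : ℤ) else 0) := by
  induction l generalizing η with
  | nil => simp [toppleSeq]
  | cons w l ih =>
    rw [toppleSeq_cons, ih]
    have hc : ∀ v : V, ((w :: l).count v : ℤ) = (l.count v : ℤ) + if v = w then 1 else 0 := by
      intro v; rw [List.count_cons]
      by_cases h : w = v
      · subst h; simp
      · have hb : (w == v) = false := by simpa [beq_iff_eq] using h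
        have hb2 : v ≠ w := fun e => h e.symm
        simp [hb, hb2]
    simp only [hc, add_mul, Finset.sum_add_distrib]
    have : ∑ v : V, (if v = w then (1:ℤ) else 0) *
        ((a (some u) (some v) : ℤ) - if u = v then (deg (some v) : ℤ) else 0)
        = (a (some u) (some w) : ℤ) - if u = w then (deg (some w) : ℤ) else 0 := by
      rw [Finset.sum_eq_single w]
      · simp
      · intro b _ hb; simp [hb]
      · intro h; exact absurd (Finset.mem_univ w) h
    rw [this]
    simp only [topple]
    ring

lemma toppleSeq_eq_of_count_eq {l₁ l₂ : List V} (h : ∀ v, l₁.count v = l₂.count v)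
    (η : V → ℤ) : toppleSeq a deg η l₁ = toppleSeq a deg η l₂ := by
  funext u
  rw [toppleSeq_formula, toppleSeq_formula]
  simp only [h]

omit [Fintype V] in
lemma exchange {v : V} :
    ∀ {l : List V} {η : V → ℤ}, (deg (some v) : ℤ) ≤ η v → v ∉ l →
      ∀ {l' : List V}, LegalSeq a deg η (l ++ v :: l') →
      LegalSeq a deg (topple a deg η v) (l ++ l') := by
  intro l
  induction l with
  | nil => intro η _ _ l' h; exact h.2
  | cons w l ih =>
    intro η hv hnm l' h
    have hwv : w ≠ v := fun e => hnm (e ▸ (List.mem_cons_self : w ∈ w :: l))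
    obtain ⟨hw, hrest⟩ := h
    constructor
    · exact le_trans hw (le_topple_of_ne a deg η hwv)
    · rw [topple_comm]
      exact ih (le_trans hv (le_topple_of_ne a deg η (Ne.symm hwv)))
        (fun e => hnm (List.mem_cons_of_mem _ e)) hrest

omit [Fintype V] in
lemma first_split {v : V} : ∀ {l : List V}, v ∈ l →
    ∃ la lb, l = la ++ v :: lb ∧ v ∉ la := by
  intro l
  induction l with
  | nil => intro h; cases h
  | cons w l ih =>
    intro h
    by_cases hw : w = v
    · exact ⟨[], l, by simp [hw], by simp⟩
    · obtain ⟨la, lb, h1, h2⟩ := ih ((List.mem_cons.mp h).resolve_left (fun e => hw e.symm))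
      exact ⟨w :: la, lb, by rw [h1]; rfl, by simp [h2, Ne.symm hw]⟩

lemma count_le : ∀ (n : ℕ) (η : V → ℤ) (l₁ l₂ : List V), l₂.length ≤ n →
    LegalSeq a deg η l₁ → LegalSeq a deg η l₂ →
    StableConfig deg (toppleSeq a deg η l₁) →
    ∀ v, l₂.count v ≤ l₁.count v := by
  intro n
  induction n with
  | zero =>
    intro η l₁ l₂ hlen _ _ _ v
    rw [List.length_eq_zero_iff.mp (Nat.le_zero.mp hlen)]
    simp
  | succ n ih =>
    intro η l₁ l₂ hlen h1 h2 hs v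
    match l₂ with
    | [] => simp
    | w :: l₂' =>
      obtain ⟨hw, h2'⟩ := h2
      have hmem : w ∈ l₁ := by
        by_contra hnm
        have := le_toppleSeq_of_not_mem a deg η hnm
        exact absurd (hs w) (not_lt.mpr (le_trans hw this))
      obtain ⟨la, lb, hsplit, hnla⟩ := first_split hmem
      have hleg : LegalSeq a deg (topple a deg η w) (la ++ lb) :=
        exchange a deg hw hnla (hsplit ▸ h1)
      have hcnt : ∀ u : V, (w :: (la ++ lb)).count u = l₁.count u := by
        intro u
        rw [hsplit]
        simp [List.count_cons, List.count_append]
        omega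
      have hstab : StableConfig deg (toppleSeq a deg (topple a deg η w) (la ++ lb)) := by
        rw [← toppleSeq_cons, toppleSeq_eq_of_count_eq a deg hcnt]
        exact hs
      have hlen' : l₂'.length ≤ n := by
        simpa using Nat.succ_le_succ_iff.mp (by simpa using hlen)
      have := ih (topple a deg η w) (la ++ lb) l₂' hlen' hleg h2' hstab
      have h1c := this v
      have h2c := hcnt v
      rw [hsplit]
      simp only [List.count_cons, List.count_append] at *
      omega
end Aux

/-- `stmt_13` (abelian property): any two maximal (i.e. stabilizing) sequences
of legal topplings of the same sandpile use each vertex the same number of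
times and produce the same stable configuration. -/
theorem stmt_13 (V : Type) [Fintype V] [DecidableEq V]
    (a : Option V → Option V → ℕ)
    (hsymm : ∀ p q, a p q = a q p) (hloop : ∀ p, a p p = 0)
    (hconn : ∀ p q : Option V, Relation.ReflTransGen (fun p q => 0 < a p q) p q)
    (deg : Option V → ℕ) (hdeg : ∀ p, deg p = ∑ q : Option V, a p q)
    (η : V → ℕ) (l₁ l₂ : List V)
    (h₁ : LegalSeq a deg (fun v => (η v : ℤ)) l₁)
    (h₂ : LegalSeq a deg (fun v => (η v : ℤ)) l₂)
    (hs₁ : StableConfig deg (toppleSeq a deg (fun v => (η v : ℤ)) l₁))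
    (hs₂ : StableConfig deg (toppleSeq a deg (fun v => (η v : ℤ)) l₂)) :
    (∀ v : V, l₁.count v = l₂.count v) ∧
    toppleSeq a deg (fun v => (η v : ℤ)) l₁ =
      toppleSeq a deg (fun v => (η v : ℤ)) l₂ := by
  have hcnt : ∀ v : V, l₁.count v = l₂.count v := fun v =>
    le_antisymm
      (count_le a deg l₁.length _ l₂ l₁ le_rfl h₂ h₁ hs₂ v)
      (count_le a deg l₂.length _ l₁ l₂ le_rfl h₁ h₂ hs₁ v)
  exact ⟨hcnt, toppleSeq_eq_of_count_eq a deg hcnt _⟩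
end
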